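/- Every graph with minimum degree at least 4 has a K_4 minor. -/

import Mathlib

open SimpleGraph Set

attribute [local instance] Classical.propDecidable

/-- The chromatic number of a graph as a natural number. -/
noncomputable def chromNum {V : Type*} (G : SimpleGraph V) : ℕ := sInf {n | G.Colorable n}

/-- A set of vertices is independent if its elements are pairwise non-adjacent. -/
def IsIndepSet {V : Type*} (G : SimpleGraph V) (A : Set V) : Prop := Gᶜ.IsClique A

/-- The independence number of a graph: the clique number of the complement. -/
noncomputable def indepNum {V : Type*} (G : SimpleGraph V) [Fintype V] : ℕ := Gᶜ.cliqueNum

/-- A vertex is bisimplicial if its neighborhood is the union of two cliques. -/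
def Bisimplicial {V : Type*} (G : SimpleGraph V) (x : V) : Prop :=
  ∃ A B : Set V, G.IsClique A ∧ G.IsClique B ∧ G.neighborSet x = A ∪ B

/-- `G` has a `K_k` minor: there are `k` pairwise disjoint connected branch sets,
pairwise joined by an edge. -/
def HasKMinor {V : Type*} (G : SimpleGraph V) (k : ℕ) : Prop :=
  ∃ f : Fin k → Set V,
    (Pairwise fun i j => Disjoint (f i) (f j)) ∧
    (∀ i, (G.induce (f i)).Connected) ∧
    (∀ i j, i ≠ j → ∃ u ∈ f i, ∃ v ∈ f j, G.Adj u v)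

/-- A graph has an even hole if some even cycle of length at least 4 embeds in it
as an induced subgraph. -/
def HasEvenHole {V : Type*} (G : SimpleGraph V) : Prop :=
  ∃ n : ℕ, 4 ≤ n ∧ Even n ∧ Nonempty (cycleGraph n ↪g G)

/-- A graph is even-hole-free if it has no even hole. -/
def EvenHoleFree {V : Type*} (G : SimpleGraph V) : Prop := ¬ HasEvenHole G

section KMaux

variable {V : Type*}

private lemma exswap {G : SimpleGraph V} {s t : Set V}
    (h : ∃ u ∈ s, ∃ w ∈ t, G.Adj u w) : ∃ u ∈ t, ∃ w ∈ s, G.Adj u w := by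
  obtain ⟨u, hu, w, hw, h⟩ := h
  exact ⟨w, hw, u, hu, h.symm⟩

private lemma induce_union_adj (G : SimpleGraph V) {s t : Set V}
    (hs : (G.induce s).Connected) (ht : (G.induce t).Connected)
    {u w : V} (hu : u ∈ s) (hw : w ∈ t) (h : G.Adj u w) :
    (G.induce (s ∪ t)).Connected := by
  have h1 : (G.induce (s ∪ {u, w})).Connected :=
    induce_union_connected hs.preconnected (induce_pair_connected_of_adj h).preconnected ⟨u, hu, by simp⟩
  have h2 : (G.induce ((s ∪ {u, w}) ∪ t)).Connected :=
    induce_union_connected h1.preconnected ht.preconnected ⟨w, Or.inr (by simp), hw⟩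
  have he : (s ∪ {u, w}) ∪ t = s ∪ t := by
    apply Set.Subset.antisymm
    · rintro z ((hz | hz) | hz)
      · exact Or.inl hz
      · rcases hz with rfl | rfl
        · exact Or.inl hu
        · exact Or.inr hw
      · exact Or.inr hz
    · rintro z (hz | hz)
      · exact Or.inl (Or.inl hz)
      · exact Or.inr hz
  rwa [he] at h2

private lemma induce_list_union (G : SimpleGraph V) (f : V → Set V) :
    ∀ (js : List V), js ≠ [] →
      (∀ j ∈ js, (G.induce (f j)).Connected) →
      js.Chain' (fun i j => ∃ u ∈ f i, ∃ w ∈ f j, G.Adj u w) →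
      (G.induce (⋃ j ∈ js, f j)).Connected
  | [], h, _, _ => absurd rfl h
  | [j], _, hc, _ => by
      have hs : (⋃ k ∈ ([j] : List V), f k) = f j := by simp
      rw [hs]; exact hc j (by simp)
  | j :: j' :: rest, _, hc, hch => by
      replace hch := List.isChain_cons_cons.mp hch
      obtain ⟨⟨u, hu, w, hw, hG⟩, hch'⟩ := hch
      have ih := induce_list_union G f (j' :: rest) (by simp)
        (fun k hk => hc k (List.mem_cons_of_mem _ hk)) hch'
      have hsplit : (⋃ k ∈ (j :: j' :: rest : List V), f k)
          = f j ∪ ⋃ k ∈ (j' :: rest : List V), f k := by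
        ext z
        simp only [Set.mem_iUnion, Set.mem_union, List.mem_cons]
        constructor
        · rintro ⟨k, (rfl | hk), hz⟩
          · exact Or.inl hz
          · exact Or.inr ⟨k, hk, hz⟩
        · rintro (hz | ⟨k, hk, hz⟩)
          · exact ⟨j, Or.inl rfl, hz⟩
          · exact ⟨k, Or.inr hk, hz⟩
      rw [hsplit]
      refine induce_union_adj G (hc j (by simp)) ih hu ?_ hG
      exact Set.mem_iUnion₂.mpr ⟨j', by simp, hw⟩

private lemma hasKMinor_four (G : SimpleGraph V) (s0 s1 s2 s3 : Set V)
    (c0 : (G.induce s0).Connected) (c1 : (G.induce s1).Connected)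
    (c2 : (G.induce s2).Connected) (c3 : (G.induce s3).Connected)
    (d01 : Disjoint s0 s1) (d02 : Disjoint s0 s2) (d03 : Disjoint s0 s3)
    (d12 : Disjoint s1 s2) (d13 : Disjoint s1 s3) (d23 : Disjoint s2 s3)
    (a01 : ∃ u ∈ s0, ∃ w ∈ s1, G.Adj u w) (a02 : ∃ u ∈ s0, ∃ w ∈ s2, G.Adj u w)
    (a03 : ∃ u ∈ s0, ∃ w ∈ s3, G.Adj u w) (a12 : ∃ u ∈ s1, ∃ w ∈ s2, G.Adj u w)
    (a13 : ∃ u ∈ s1, ∃ w ∈ s3, G.Adj u w) (a23 : ∃ u ∈ s2, ∃ w ∈ s3, G.Adj u w) :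
    HasKMinor G 4 := by
  refine ⟨![s0, s1, s2, s3], ?_, ?_, ?_⟩
  · intro i j hij
    fin_cases i <;> fin_cases j <;>
      first
        | exact absurd rfl hij
        | exact d01 | exact d02 | exact d03 | exact d12 | exact d13 | exact d23
        | exact d01.symm | exact d02.symm | exact d03.symm
        | exact d12.symm | exact d13.symm | exact d23.symm
  · intro i
    fin_cases i <;> first | exact c0 | exact c1 | exact c2 | exact c3
  · intro i j hij
    fin_cases i <;> fin_cases j <;>
      first
        | exact absurd rfl hij
        | exact a01 | exact a02 | exact a03 | exact a12 | exact a13 | exact a23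
        | exact exswap a01 | exact exswap a02 | exact exswap a03
        | exact exswap a12 | exact exswap a13 | exact exswap a23

private lemma chain_getLastD {α : Type*} {R : α → α → Prop} {y : α} :
    ∀ (l : List α) (a : α), List.Chain R a (l ++ [y]) → R (l.getLastD a) y
  | [], a, h => by
      rw [List.nil_append] at h
      rcases List.chain_cons.mp h with ⟨h1, -⟩
      simpa using h1
  | b :: l', a, h => by
      rw [List.cons_append] at h
      replace h := List.isChain_cons_cons.mp h
      rw [List.getLastD_cons]
      exact chain_getLastD l' b h.2

private lemma chain_chain' {α : Type*} {R : α → α → Prop} {y : α} :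
    ∀ (l : List α) (a : α), List.Chain R a (l ++ [y]) → List.Chain' R (a :: l)
  | [], a, _ => List.isChain_singleton a
  | b :: l', a, h => by
      rw [List.cons_append] at h
      replace h := List.isChain_cons_cons.mp h
      exact List.isChain_cons_cons.mpr ⟨h.1, chain_chain' l' b h.2⟩

private lemma getLastD_mem_cons' {α : Type*} : ∀ (l : List α) (a : α), l.getLastD a ∈ a :: l
  | [], a => by simp
  | b :: l', a => by
      rw [List.getLastD_cons]
      exact List.mem_cons_of_mem a (getLastD_mem_cons' l' b)

/-- In a path starting at `u`, at most one edge of the path contains `u`. -/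
private lemma edge_at_start_unique {W : Type*} {H : SimpleGraph W} {u v : W}
    {p : H.Walk u v} (hp : p.IsPath) {w1 w2 : W}
    (h1 : s(u, w1) ∈ p.edges) (h2 : s(u, w2) ∈ p.edges) : w1 = w2 := by
  cases p with
  | nil => simp at h1
  | @cons _ b _ hadj p' =>
      rw [SimpleGraph.Walk.cons_isPath_iff] at hp
      have key : ∀ w, s(u, w) ∈ (SimpleGraph.Walk.cons hadj p').edges → w = b := by
        intro w hw
        rw [SimpleGraph.Walk.edges_cons, List.mem_cons] at hw
        rcases hw with hw | hw
        · rw [Sym2.eq_iff] at hw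
          rcases hw with ⟨-, rfl⟩ | ⟨h', rfl⟩
          · rfl
          · exact absurd h' hadj.ne
        · exact absurd (SimpleGraph.Walk.fst_mem_support_of_mem_edges p' hw) hp.2
      rw [key w1 h1, key w2 h2]

/-- A finite nonempty graph with all degrees at least 2 contains a "cycle list". -/
private lemma exists_cycle_list {W : Type*} [Fintype W] [Nonempty W] (H : SimpleGraph W)
    (hdeg : ∀ w : W, 2 ≤ H.degree w) :
    ∃ (x : W) (L : List W), (x :: L).Nodup ∧ 2 ≤ L.length ∧ List.Chain H.Adj x (L ++ [x]) := by
  classical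
  set P : ℕ → Prop := fun n => ∃ (u v : W) (p : H.Walk u v), p.IsPath ∧ p.length = n with hPdef
  have hP0 : P 0 := ⟨Classical.arbitrary W, Classical.arbitrary W, SimpleGraph.Walk.nil,
    SimpleGraph.Walk.IsPath.nil, rfl⟩
  set k := Nat.findGreatest P (Fintype.card W) with hk
  have hPk : P k := Nat.findGreatest_spec (Nat.zero_le _) hP0
  obtain ⟨u, v, p, hp, hlen⟩ := hPk
  have hnb : ∀ z, H.Adj u z → z ∈ p.support := by
    intro z hz
    by_contra hzs
    have hp' : (SimpleGraph.Walk.cons hz.symm p).IsPath := hp.cons hzs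
    have hPk1 : P (k + 1) := ⟨z, v, _, hp', by simp [hlen]⟩
    have hb : k + 1 ≤ Fintype.card W := by
      have hl := hp'.length_lt
      simp only [SimpleGraph.Walk.length_cons, hlen] at hl
      omega
    exact Nat.findGreatest_is_greatest (Nat.lt_succ_self k) hb hPk1
  have hnedge : ∃ w, H.Adj u w ∧ s(u, w) ∉ p.edges := by
    obtain ⟨z1, hz1, z2, hz2, hz12⟩ := Finset.one_lt_card.mp
      (lt_of_lt_of_le Nat.one_lt_two (hdeg u))
    rw [SimpleGraph.mem_neighborFinset] at hz1 hz2
    by_cases h1 : s(u, z1) ∈ p.edges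
    · refine ⟨z2, hz2, fun h2 => hz12 ?_⟩
      exact edge_at_start_unique hp h1 h2
    · exact ⟨z1, hz1, h1⟩
  obtain ⟨w, hw, hwe⟩ := hnedge
  have hws : w ∈ p.support := hnb w hw
  set q := p.takeUntil w hws with hq
  have hqp : q.IsPath := hp.takeUntil hws
  have hedge : s(w, u) ∉ q.edges := by
    intro hmem
    rw [Sym2.eq_swap] at hmem
    exact hwe (p.edges_takeUntil_subset hws hmem)
  have hcyc : (SimpleGraph.Walk.cons hw.symm q).IsCycle :=
    (SimpleGraph.Walk.cons_isCycle_iff q hw.symm).mpr ⟨hqp, hedge⟩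
  set L := (q.reverse.support.tail).reverse with hL
  have hsupp : q.support = L ++ [w] := by
    have h1 : q.reverse.support = w :: q.reverse.support.tail :=
      SimpleGraph.Walk.support_eq_cons _
    rw [SimpleGraph.Walk.support_reverse] at h1
    have h2 := congrArg List.reverse h1
    rw [List.reverse_reverse, List.reverse_cons] at h2
    rw [h2, hL, SimpleGraph.Walk.support_reverse]
  refine ⟨w, L, ?_, ?_, ?_⟩
  · have hnd : (L ++ [w]).Nodup := by rw [← hsupp]; exact hqp.support_nodup
    rw [List.nodup_append] at hnd
    rw [List.nodup_cons]
    exact ⟨fun hwL => hnd.2.2 w hwL w (by simp) rfl, hnd.1⟩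
  · have h3 : 3 ≤ (SimpleGraph.Walk.cons hw.symm q).length := hcyc.three_le_length
    rw [SimpleGraph.Walk.length_cons] at h3
    have hls : q.support.length = q.length + 1 := SimpleGraph.Walk.length_support q
    rw [hsupp] at hls
    simp only [List.length_append, List.length_cons, List.length_nil] at hls
    omega
  · rw [← hsupp]
    exact SimpleGraph.Walk.isChain_adj_cons_support hw.symm q

end KMaux

section KMmain

variable {V : Type*}

/-- The quotient graph of a branch decomposition. -/
private def QG (G : SimpleGraph V) (f : V → Set V) : SimpleGraph V where
  Adj i j := i ≠ j ∧ ∃ u ∈ f i, ∃ w ∈ f j, G.Adj u w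
  symm := ⟨by
    rintro i j ⟨hne, u, hu, w, hw, h⟩
    exact ⟨hne.symm, w, hw, u, hu, h.symm⟩⟩
  loopless := ⟨by rintro i ⟨hne, -⟩; exact hne rfl⟩

private lemma key [Fintype V] (G : SimpleGraph V) :
    ∀ (n : ℕ) (f : V → Set V),
      (∀ i j, i ≠ j → Disjoint (f i) (f j)) →
      (∀ i, (f i).Nonempty → (G.induce (f i)).Connected) →
      (Finset.univ.filter fun i => (f i).Nonempty).card ≤ n →
      4 ≤ (Finset.univ.filter fun i => (f i).Nonempty).card →
      2 * (Finset.univ.filter fun i => (f i).Nonempty).card - 2 ≤ (QG G f).edgeFinset.card →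
      HasKMinor G 4 := by
  intro n
  induction n with
  | zero =>
      intro f _ _ hle h4 _
      omega
  | succ n IH =>
      intro f hdis hconn hle h4 hm
      set Q := QG G f with hQdef
      set A := Finset.univ.filter fun i => (f i).Nonempty with hAdef
      have hact : ∀ {i j : V}, Q.Adj i j → i ∈ A ∧ j ∈ A := by
        rintro i j ⟨-, u, hu, w, hw, -⟩
        constructor <;> rw [hAdef, Finset.mem_filter]
        · exact ⟨Finset.mem_univ _, ⟨u, hu⟩⟩
        · exact ⟨Finset.mem_univ _, ⟨w, hw⟩⟩
      have hconnA : ∀ {i : V}, i ∈ A → (G.induce (f i)).Connected := by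
        intro i hi
        rw [hAdef, Finset.mem_filter] at hi
        exact hconn i hi.2
      by_cases hN : A.card = 4
      -- BASE CASE: exactly 4 branch sets, quotient must be complete
      · have hcomp : ∀ i ∈ A, ∀ j ∈ A, i ≠ j → Q.Adj i j := by
          by_contra hc
          push_neg at hc
          obtain ⟨i, hi, j, hj, hij, hnadj⟩ := hc
          have hsub : Q.edgeFinset ∪ {s(i, j)} ∪ A.image Sym2.diag ⊆ A.sym2 := by
            intro e he
            rw [Finset.mem_union, Finset.mem_union] at he
            rcases he with (he | he) | he
            · rw [SimpleGraph.mem_edgeFinset] at he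
              revert he
              refine Sym2.ind (fun a b he => ?_) e
              rw [SimpleGraph.mem_edgeSet] at he
              rw [Finset.mk_mem_sym2_iff]
              exact hact he
            · rw [Finset.mem_singleton] at he
              subst he
              rw [Finset.mk_mem_sym2_iff]
              exact ⟨hi, hj⟩
            · rw [Finset.mem_image] at he
              obtain ⟨a, ha, rfl⟩ := he
              exact Finset.mk_mem_sym2_iff.mpr ⟨ha, ha⟩
          have hd1 : Disjoint Q.edgeFinset ({s(i, j)} : Finset (Sym2 V)) := by
            rw [Finset.disjoint_singleton_right, SimpleGraph.mem_edgeFinset,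
              SimpleGraph.mem_edgeSet]
            exact hnadj
          have hd2 : Disjoint (Q.edgeFinset ∪ {s(i, j)}) (A.image Sym2.diag) := by
            rw [Finset.disjoint_left]
            intro e he hedge
            rw [Finset.mem_image] at hedge
            obtain ⟨a, -, rfl⟩ := hedge
            rw [Finset.mem_union] at he
            rcases he with he | he
            · rw [SimpleGraph.mem_edgeFinset] at he
              exact Q.not_isDiag_of_mem_edgeSet he (Sym2.diag_isDiag a)
            · rw [Finset.mem_singleton] at he
              have hdg : (s(i, j) : Sym2 V).IsDiag := he ▸ Sym2.diag_isDiag a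
              rw [Sym2.mk_isDiag_iff] at hdg
              exact hij hdg
          have hcards : Q.edgeFinset.card + 1 + A.card ≤ A.sym2.card := by
            have h1 := Finset.card_union_of_disjoint hd1
            have h2 := Finset.card_union_of_disjoint hd2
            have h3 := Finset.card_le_card hsub
            have h4' : (A.image Sym2.diag).card = A.card :=
              Finset.card_image_of_injective _ Sym2.diag_injective
            rw [h2, h1, Finset.card_singleton, h4'] at h3
            omega
          rw [Finset.card_sym2, hN] at hcards
          have hch : Nat.choose (4 + 1) 2 = 10 := by decide
          omega
        have hpos : 0 < A.card := by omega
        obtain ⟨a, ha⟩ := Finset.card_pos.mp hpos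
        have h3 : (A.erase a).card = 3 := by
          rw [Finset.card_erase_of_mem ha, hN]
        obtain ⟨b, c, d, hbc, hbd, hcd, hset⟩ := Finset.card_eq_three.mp h3
        have hbe : b ∈ A.erase a := by rw [hset]; simp
        have hce : c ∈ A.erase a := by rw [hset]; simp
        have hde : d ∈ A.erase a := by rw [hset]; simp
        have hbA := Finset.mem_of_mem_erase hbe
        have hcA := Finset.mem_of_mem_erase hce
        have hdA := Finset.mem_of_mem_erase hde
        have hab : a ≠ b := (Finset.ne_of_mem_erase hbe).symm
        have hac : a ≠ c := (Finset.ne_of_mem_erase hce).symm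
        have had : a ≠ d := (Finset.ne_of_mem_erase hde).symm
        exact hasKMinor_four G (f a) (f b) (f c) (f d)
          (hconnA ha) (hconnA hbA) (hconnA hcA) (hconnA hdA)
          (hdis a b hab) (hdis a c hac) (hdis a d had)
          (hdis b c hbc) (hdis b d hbd) (hdis c d hcd)
          (hcomp a ha b hbA hab).2 (hcomp a ha c hcA hac).2 (hcomp a ha d hdA had).2
          (hcomp b hbA c hcA hbc).2 (hcomp b hbA d hdA hbd).2 (hcomp c hcA d hdA hcd).2
      -- INDUCTIVE STEP: at least 5 branch sets
      · have hN5 : 5 ≤ A.card := by omega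
        by_cases hb : ∃ x y, Q.Adj x y ∧
            (Finset.univ.filter fun z => Q.Adj x z ∧ Q.Adj y z).card ≤ 1
        -- CONTRACTION CASE
        · obtain ⟨x, y, hxy, hcn⟩ := hb
          have hxyne : x ≠ y := hxy.1
          set f' := Function.update (Function.update f y ∅) x (f x ∪ f y) with hf'
          have hfx : f' x = f x ∪ f y := by
            rw [hf', Function.update_self]
          have hfy : f' y = ∅ := by
            rw [hf', Function.update_of_ne hxyne.symm, Function.update_self]
          have hfj : ∀ j, j ≠ x → j ≠ y → f' j = f j := by
            intro j hjx hjy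
            rw [hf', Function.update_of_ne hjx, Function.update_of_ne hjy]
          have hsup : ∀ j, j ≠ y → f j ⊆ f' j := by
            intro j hjy
            by_cases hjx : j = x
            · subst hjx; rw [hfx]; exact Set.subset_union_left
            · rw [hfj j hjx hjy]
          have hxA : x ∈ A := (hact hxy).1
          have hyA : y ∈ A := (hact hxy).2
          have hdis' : ∀ i j, i ≠ j → Disjoint (f' i) (f' j) := by
            intro i j hij
            by_cases hiy : i = y
            · rw [hiy, hfy]; simp
            · by_cases hjy : j = y
              · rw [hjy, hfy]; simp
              · by_cases hix : i = x
                · have hjx : j ≠ x := fun hjx => hij (hix.trans hjx.symm)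
                  rw [hix, hfx, hfj j hjx hjy]
                  exact Set.disjoint_union_left.mpr
                    ⟨hdis x j (fun hxj => hij (hix.trans hxj)),
                     hdis y j (fun hyj => hjy hyj.symm)⟩
                · by_cases hjx : j = x
                  · rw [hjx, hfx, hfj i hix hiy]
                    exact Set.disjoint_union_right.mpr
                      ⟨hdis i x (fun h => hij (h.trans hjx.symm)), hdis i y hiy⟩
                  · rw [hfj i hix hiy, hfj j hjx hjy]
                    exact hdis i j hij
          have hconn' : ∀ i, (f' i).Nonempty → (G.induce (f' i)).Connected := by
            intro i hi
            by_cases hix : i = x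
            · rw [hix, hfx]
              obtain ⟨-, u, hu, w, hw, hG⟩ := hxy
              exact induce_union_adj G (hconnA hxA) (hconnA hyA) hu hw hG
            · by_cases hiy : i = y
              · rw [hiy, hfy] at hi; exact absurd hi (by simp)
              · rw [hfj i hix hiy] at hi ⊢
                exact hconn i hi
          have hA' : (Finset.univ.filter fun i => (f' i).Nonempty) = A.erase y := by
            ext i
            rw [Finset.mem_filter, Finset.mem_erase, hAdef, Finset.mem_filter]
            constructor
            · rintro ⟨-, hi⟩
              have hiy : i ≠ y := by
                intro hiy; rw [hiy, hfy] at hi; exact absurd hi (by simp)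
              refine ⟨hiy, Finset.mem_univ _, ?_⟩
              by_cases hix : i = x
              · rw [hix]
                rw [hAdef, Finset.mem_filter] at hxA
                exact hxA.2
              · rw [hfj i hix hiy] at hi
                exact hi
            · rintro ⟨hiy, -, hi⟩
              refine ⟨Finset.mem_univ _, ?_⟩
              by_cases hix : i = x
              · rw [hix] at hi
                rw [hix, hfx]
                exact hi.mono Set.subset_union_left
              · rw [hfj i hix hiy]; exact hi
          have hcard' : (Finset.univ.filter fun i => (f' i).Nonempty).card = A.card - 1 := by
            rw [hA', Finset.card_erase_of_mem hyA]
          -- edge counting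
          set Q' := QG G f' with hQ'def
          set r : Sym2 V → Sym2 V := Sym2.map (fun i => if i = y then x else i) with hr
          set Ey := (Q.edgeFinset.filter fun e => y ∈ e).erase s(x, y) with hEy
          set Rest := Q.edgeFinset.filter (fun e => ¬ y ∈ e) with hRest
          have hcount : Q.edgeFinset.card = Rest.card + Ey.card + 1 := by
            have h1 : ((Q.edgeFinset.filter fun e => y ∈ e).card
                + (Q.edgeFinset.filter fun e => ¬ y ∈ e).card) = Q.edgeFinset.card :=
              Finset.card_filter_add_card_filter_not _
            have hxymem : s(x, y) ∈ Q.edgeFinset.filter fun e => y ∈ e := by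
              rw [Finset.mem_filter, SimpleGraph.mem_edgeFinset, SimpleGraph.mem_edgeSet]
              exact ⟨hxy, by simp⟩
            have h3 : 1 ≤ (Q.edgeFinset.filter fun e => y ∈ e).card :=
              Finset.card_pos.mpr ⟨_, hxymem⟩
            have h2 : Ey.card + 1 = (Q.edgeFinset.filter fun e => y ∈ e).card := by
              rw [hEy, Finset.card_erase_of_mem hxymem]
              omega
            rw [hRest]
            omega
          have hre : ∀ j : V, j ≠ y → r s(y, j) = s(x, j) := by
            intro j hj
            rw [hr, Sym2.map_pair_eq, if_pos rfl, if_neg hj]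
          have hshape : ∀ e ∈ Ey, ∃ j : V, e = s(y, j) ∧ j ≠ x ∧ j ≠ y ∧ Q.Adj y j := by
            intro e he
            rw [hEy, Finset.mem_erase, Finset.mem_filter, SimpleGraph.mem_edgeFinset] at he
            obtain ⟨hnexy, hmem, hye⟩ := he
            obtain ⟨j, rfl⟩ := Sym2.mem_iff_exists.mp hye
            have hadj : Q.Adj y j := (SimpleGraph.mem_edgeSet Q).mp hmem
            refine ⟨j, rfl, ?_, fun hjy => (Q.irrefl (v := y)) (hjy ▸ hadj), hadj⟩
            intro hjx; subst hjx
            exact hnexy Sym2.eq_swap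
          have hRestSub : Rest ⊆ Q'.edgeFinset := by
            intro e
            refine Sym2.ind (fun a b he => ?_) e
            rw [hRest, Finset.mem_filter, SimpleGraph.mem_edgeFinset,
              SimpleGraph.mem_edgeSet] at he
            obtain ⟨hadj, hynot⟩ := he
            rw [Sym2.mem_iff] at hynot
            push_neg at hynot
            obtain ⟨hne, u, hu, w, hw, hG⟩ := hadj
            rw [SimpleGraph.mem_edgeFinset, SimpleGraph.mem_edgeSet]
            exact ⟨hne, u, hsup a (Ne.symm hynot.1) hu, w, hsup b (Ne.symm hynot.2) hw, hG⟩
          have hEySub : Ey.image r ⊆ Q'.edgeFinset := by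
            intro e' he'
            rw [Finset.mem_image] at he'
            obtain ⟨e, he, rfl⟩ := he'
            obtain ⟨j, rfl, hjx, hjy, hadj⟩ := hshape e he
            rw [hre j hjy]
            rw [SimpleGraph.mem_edgeFinset, SimpleGraph.mem_edgeSet]
            obtain ⟨-, u, hu, w, hw, hG⟩ := hadj
            refine ⟨Ne.symm hjx, u, ?_, w, ?_, hG⟩
            · rw [hfx]; exact Set.mem_union_right _ hu
            · rw [hfj j hjx hjy]; exact hw
          have hInj : Set.InjOn r ↑Ey := by
            intro e1 h1 e2 h2 heq
            obtain ⟨j1, rfl, hj1x, hj1y, -⟩ := hshape e1 (Finset.mem_coe.mp h1)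
            obtain ⟨j2, rfl, hj2x, hj2y, -⟩ := hshape e2 (Finset.mem_coe.mp h2)
            rw [hre j1 hj1y, hre j2 hj2y] at heq
            rw [Sym2.eq_iff] at heq
            rcases heq with ⟨-, rfl⟩ | ⟨hx2, hx1⟩
            · rfl
            · exact absurd hx1 hj1x
          have hOverlap : Rest ∩ Ey.image r ⊆
              (Finset.univ.filter fun z => Q.Adj x z ∧ Q.Adj y z).image (fun z => s(x, z)) := by
            intro e he
            rw [Finset.mem_inter] at he
            obtain ⟨heR, heI⟩ := he
            rw [Finset.mem_image] at heI
            obtain ⟨e0, he0, rfl⟩ := heI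
            obtain ⟨j, rfl, hjx, hjy, hyadj⟩ := hshape e0 he0
            rw [hre j hjy] at heR ⊢
            rw [hRest, Finset.mem_filter, SimpleGraph.mem_edgeFinset,
              SimpleGraph.mem_edgeSet] at heR
            exact Finset.mem_image.mpr
              ⟨j, Finset.mem_filter.mpr ⟨Finset.mem_univ _, heR.1, hyadj⟩, rfl⟩
          have hUsub : Rest ∪ Ey.image r ⊆ Q'.edgeFinset := Finset.union_subset hRestSub hEySub
          have hci := Finset.card_union_add_card_inter Rest (Ey.image r)
          have himg : (Ey.image r).card = Ey.card := Finset.card_image_of_injOn hInj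
          have hint : (Rest ∩ Ey.image r).card ≤ 1 :=
            le_trans (Finset.card_le_card hOverlap) (le_trans Finset.card_image_le hcn)
          have hQ'ge : Rest.card + Ey.card ≤ Q'.edgeFinset.card + 1 := by
            have hc := Finset.card_le_card hUsub
            omega
          clear_value A Q Q' r Ey Rest
          refine IH f' hdis' hconn' ?_ ?_ ?_
          · rw [hcard']; omega
          · rw [hcard']; omega
          · rw [hcard', ← hQ'def]; omega
        -- WHEEL CASE
        · push_neg at hb
          have hEne : Q.edgeFinset.Nonempty := by
            rw [← Finset.card_pos]; omega
          obtain ⟨e, he⟩ := hEne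
          have hvex : ∃ v y0, Q.Adj v y0 := by
            revert he
            refine Sym2.ind (fun a b he => ?_) e
            rw [SimpleGraph.mem_edgeFinset, SimpleGraph.mem_edgeSet] at he
            exact ⟨a, b, he⟩
          obtain ⟨v, y0, hvy0⟩ := hvex
          set S := Q.neighborSet v with hS
          haveI : Nonempty ↥S := ⟨⟨y0, hvy0⟩⟩
          set H := Q.induce S with hH
          have hHA : ∀ {a b : ↥S}, H.Adj a b → Q.Adj ↑a ↑b := fun hab => hab
          have hSA : ∀ (s : ↥S), Q.Adj v ↑s := fun s => s.2
          have hdegH : ∀ w : ↥S, 2 ≤ H.degree w := by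
            intro w
            have h2 := hb v ↑w (hSA w)
            obtain ⟨z1, hz1, z2, hz2, hz12⟩ := Finset.one_lt_card.mp h2
            rw [Finset.mem_filter] at hz1 hz2
            have hz1S : z1 ∈ S := hz1.2.1
            have hz2S : z2 ∈ S := hz2.2.1
            have hcard : (1 : ℕ) < (H.neighborFinset w).card := by
              refine Finset.one_lt_card.mpr
                ⟨⟨z1, hz1S⟩, ?_, ⟨z2, hz2S⟩, ?_, ?_⟩
              · rw [SimpleGraph.mem_neighborFinset]; exact hz1.2.2
              · rw [SimpleGraph.mem_neighborFinset]; exact hz2.2.2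
              · intro hcontra; exact hz12 (congrArg Subtype.val hcontra)
            exact hcard
          obtain ⟨x, L, hnd, hlen, hchain⟩ := exists_cycle_list H hdegH
          rcases L with - | ⟨b', L1⟩
          · simp at hlen
          rcases L1 with - | ⟨t0, T⟩
          · simp at hlen
          rw [List.cons_append] at hchain
          replace hchain := List.isChain_cons_cons.mp hchain
          obtain ⟨hxb, hchain⟩ := hchain
          rw [List.cons_append] at hchain
          replace hchain := List.isChain_cons_cons.mp hchain
          obtain ⟨hbt, hchain⟩ := hchain
          have hlast : H.Adj (T.getLastD t0) x := chain_getLastD T t0 hchain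
          have hchain' : List.Chain' H.Adj (t0 :: T) := chain_chain' T t0 hchain
          set js := (t0 :: T).map (Subtype.val : ↥S → V) with hjs
          have hjsne : js ≠ [] := by simp [hjs]
          have hjsmem : ∀ (s : ↥S), s ∈ t0 :: T → (s : V) ∈ js := by
            intro s hs
            rw [hjs, List.mem_map]
            exact ⟨s, hs, rfl⟩
          have hjsconn : ∀ j ∈ js, (G.induce (f j)).Connected := by
            intro j hj
            rw [hjs, List.mem_map] at hj
            obtain ⟨s, hs, rfl⟩ := hj
            exact hconnA (hact (hSA s)).2
          have hjschain : js.Chain' (fun i j => ∃ u ∈ f i, ∃ w ∈ f j, G.Adj u w) := by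
            rw [hjs]
            exact (List.isChain_map _).mpr (List.IsChain.imp (fun ⦃a b⦄ hab => (hHA hab).2) hchain')
          set s3 := ⋃ j ∈ js, f j with hs3
          have hs3conn : (G.induce s3).Connected :=
            induce_list_union G f js hjsne hjsconn hjschain
          have hvS : v ∉ S := fun hvv => Q.irrefl hvv
          have hvne : ∀ (s : ↥S), v ≠ ↑s := by
            intro s hvs
            exact hvS (hvs ▸ s.2)
          have hndx : x ∉ b' :: t0 :: T := (List.nodup_cons.mp hnd).1
          have hndrest : (b' :: t0 :: T).Nodup := (List.nodup_cons.mp hnd).2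
          have hndb : b' ∉ t0 :: T := (List.nodup_cons.mp hndrest).1
          have hsne : ∀ (s1 s2 : ↥S), s1 ≠ s2 → (s1 : V) ≠ (s2 : V) :=
            fun s1 s2 h12 hv => h12 (Subtype.ext hv)
          have hdisj_s3 : ∀ i : V, (∀ j ∈ js, i ≠ j) → Disjoint (f i) s3 := by
            intro i hi
            rw [hs3]
            refine Set.disjoint_iUnion_right.mpr fun j =>
              Set.disjoint_iUnion_right.mpr fun hj => hdis i j (hi j hj)
          have hjs_ne_of : ∀ (a : ↥S), a ∉ t0 :: T → ∀ j ∈ js, (a : V) ≠ j := by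
            intro a ha j hj
            rw [hjs, List.mem_map] at hj
            obtain ⟨s, hs, rfl⟩ := hj
            exact hsne a s (fun h => ha (h ▸ hs))
          have hmem_s3 : ∀ (s : ↥S), s ∈ t0 :: T → f ↑s ⊆ s3 := by
            intro s hs
            rw [hs3]
            intro z hz
            exact Set.mem_iUnion₂.mpr ⟨↑s, hjsmem s hs, hz⟩
          -- the four adjacencies from the quotient graph
          have hQvx : Q.Adj v ↑x := hSA x
          have hQvb : Q.Adj v ↑b' := hSA b'
          have hQvt : Q.Adj v ↑t0 := hSA t0
          have hQxb : Q.Adj ↑x ↑b' := hHA hxb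
          have hQbt : Q.Adj ↑b' ↑t0 := hHA hbt
          have hQlx : Q.Adj ↑(T.getLastD t0) ↑x := hHA hlast
          have hglmem : T.getLastD t0 ∈ t0 :: T := getLastD_mem_cons' T t0
          refine hasKMinor_four G (f v) (f ↑x) (f ↑b') s3
            (hconnA (hact hQvx).1) (hconnA (hact hQvx).2) (hconnA (hact hQvb).2) hs3conn
            (hdis v ↑x (hvne x)) (hdis v ↑b' (hvne b'))
            (hdisj_s3 v (fun j hj => by
              rw [hjs, List.mem_map] at hj
              obtain ⟨s, -, rfl⟩ := hj
              exact hvne s))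
            (hdis ↑x ↑b' (hsne x b' (fun h => hndx (h ▸ (List.mem_cons_self : b' ∈ b' :: t0 :: T)))))
            (hdisj_s3 ↑x (hjs_ne_of x (fun hx' => hndx (List.mem_cons_of_mem b' hx'))))
            (hdisj_s3 ↑b' (hjs_ne_of b' hndb))
            hQvx.2 hQvb.2
            ?_ hQxb.2 ?_ ?_
          · obtain ⟨u, hu, w, hw, hG⟩ := hQvt.2
            exact ⟨u, hu, w, hmem_s3 t0 List.mem_cons_self hw, hG⟩
          · obtain ⟨u, hu, w, hw, hG⟩ := hQlx.2
            exact ⟨w, hw, u, hmem_s3 _ hglmem hu, hG.symm⟩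
          · obtain ⟨u, hu, w, hw, hG⟩ := hQbt.2
            exact ⟨u, hu, w, hmem_s3 t0 List.mem_cons_self hw, hG⟩

end KMmain

/-- Every graph with minimum degree at least 4 has a `K_4` minor. -/
theorem stmt_10 {V : Type*} [Fintype V] (G : SimpleGraph V) [Nonempty V]
    (h : 4 ≤ G.minDegree) :
    HasKMinor G 4 := by
  classical
  set f0 : V → Set V := fun v => ({v} : Set V) with hf0
  have hdis : ∀ i j : V, i ≠ j → Disjoint (f0 i) (f0 j) := by
    intro i j hij
    simp only [hf0]
    rw [Set.disjoint_singleton_left, Set.mem_singleton_iff]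
    exact hij
  have hconn : ∀ i : V, (f0 i).Nonempty → (G.induce (f0 i)).Connected := by
    intro i _
    rw [SimpleGraph.connected_iff]
    refine ⟨fun a b => ?_, ⟨⟨i, rfl⟩⟩⟩
    have ha : (a : V) = i := a.2
    have hb : (b : V) = i := b.2
    have hab : a = b := Subtype.ext (ha.trans hb.symm)
    rw [hab]
  have hQ : QG G f0 = G := by
    ext i j
    constructor
    · rintro ⟨hne, u, hu, w, hw, hG⟩
      have hu' : u = i := hu
      have hw' : w = j := hw
      rwa [hu', hw'] at hG
    · intro hij
      exact ⟨hij.ne, i, rfl, j, rfl, hij⟩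
  have hcardE : (QG G f0).edgeFinset.card = G.edgeFinset.card := by
    rw [SimpleGraph.edgeFinset_card, SimpleGraph.edgeFinset_card]
    exact Fintype.card_congr (Equiv.setCongr (congrArg SimpleGraph.edgeSet hQ))
  have hsum := G.sum_degrees_eq_twice_card_edges
  have h4n : 4 * Fintype.card V ≤ 2 * G.edgeFinset.card := by
    rw [← hsum]
    calc 4 * Fintype.card V = ∑ _v : V, 4 := by
          rw [Finset.sum_const, Finset.card_univ, smul_eq_mul, mul_comm]
    _ ≤ ∑ v : V, G.degree v :=
          Finset.sum_le_sum fun v _ => le_trans h (G.minDegree_le_degree v)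
  obtain ⟨v0⟩ := ‹Nonempty V›
  have hv5 : 5 ≤ Fintype.card V := by
    have h1 : G.degree v0 < Fintype.card V := G.degree_lt_card_verts v0
    have h2 : 4 ≤ G.degree v0 := le_trans h (G.minDegree_le_degree v0)
    omega
  have hAcard : (Finset.univ.filter fun i => (f0 i).Nonempty).card = Fintype.card V := by
    rw [Finset.filter_true_of_mem, Finset.card_univ]
    intro i _
    exact ⟨i, rfl⟩
  exact key G (Fintype.card V) f0 hdis hconn (le_of_eq hAcard)
    (by rw [hAcard]; omega) (by rw [hAcard, hcardE]; omega)
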